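/- Let ρ > 1, 0 ≤ w ≤ 1, 0 ≤ a ≤ 1 and let φ : ℤ → ℝ be bounded. Then F maps the space l∞(ℤ) of bounded two-sided real sequences (with supremum norm ‖U‖ = sup_{j∈ℤ} |U_j|) into itself and is a contraction with ‖F U − F V‖ ≤ (1/ρ)·‖U − V‖ for all bounded U, V; hence F has a unique fixed point in l∞(ℤ). Moreover, if (W^n)_{n≥0} is a uniformly bounded family of sequences with W^n = F(W^{n+1}) for all n ≥ 0, then W^n = W^0 for all n and W^0 is that unique fixed point; in particular the limit as maturity tends to infinity of the explicit-difference-scheme price of an American put option does not depend on time. -/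

import Mathlib

/-- The explicit-difference-scheme operator
`(F U)_j = max{ (1/ρ)·[(1−w)·U_j + w·(a·U_{j+1} + (1−a)·U_{j−1})], φ_j }`. -/
noncomputable def Fop (ρ w a : ℝ) (φ : ℤ → ℝ) (U : ℤ → ℝ) : ℤ → ℝ :=
  fun j => max ((1 / ρ) * ((1 - w) * U j + w * (a * U (j + 1) + (1 - a) * U (j - 1)))) (φ j)

lemma Fop_inner_bound (ρ w a : ℝ) (hρ : 1 < ρ) (hw0 : 0 ≤ w) (hw1 : w ≤ 1)
    (ha0 : 0 ≤ a) (ha1 : a ≤ 1) {d0 d1 d2 K : ℝ}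
    (h0 : |d0| ≤ K) (h1 : |d1| ≤ K) (h2 : |d2| ≤ K) :
    |(1 / ρ) * ((1 - w) * d0 + w * (a * d1 + (1 - a) * d2))| ≤ (1 / ρ) * K := by
  have hρ0 : (0:ℝ) < ρ := by linarith
  have hρ0' : (0:ℝ) ≤ 1 / ρ := by positivity
  rw [abs_mul, abs_of_nonneg hρ0']
  have key : |(1 - w) * d0 + w * (a * d1 + (1 - a) * d2)| ≤ K := by
    have := abs_le.mp h0
    have := abs_le.mp h1
    have := abs_le.mp h2
    rw [abs_le]
    constructor <;> nlinarith [mul_nonneg hw0 ha0, mul_nonneg hw0 (by linarith : (0:ℝ) ≤ 1 - a)]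
  exact mul_le_mul_of_nonneg_left key hρ0'

lemma Fop_pointwise (ρ w a : ℝ) (hρ : 1 < ρ) (hw0 : 0 ≤ w) (hw1 : w ≤ 1)
    (ha0 : 0 ≤ a) (ha1 : a ≤ 1) (φ U V : ℤ → ℝ) {K : ℝ}
    (hK : ∀ j, |U j - V j| ≤ K) (j : ℤ) :
    |Fop ρ w a φ U j - Fop ρ w a φ V j| ≤ (1 / ρ) * K := by
  have h := abs_max_sub_max_le_abs
    ((1 / ρ) * ((1 - w) * U j + w * (a * U (j + 1) + (1 - a) * U (j - 1))))
    ((1 / ρ) * ((1 - w) * V j + w * (a * V (j + 1) + (1 - a) * V (j - 1)))) (φ j)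
  refine h.trans ?_
  have : (1 / ρ) * ((1 - w) * U j + w * (a * U (j + 1) + (1 - a) * U (j - 1))) -
      (1 / ρ) * ((1 - w) * V j + w * (a * V (j + 1) + (1 - a) * V (j - 1))) =
      (1 / ρ) * ((1 - w) * (U j - V j) + w * (a * (U (j+1) - V (j+1)) + (1 - a) * (U (j-1) - V (j-1)))) := by
    ring
  rw [this]
  exact Fop_inner_bound ρ w a hρ hw0 hw1 ha0 ha1 (hK j) (hK (j+1)) (hK (j-1))

lemma Fop_bounded (ρ w a : ℝ) (hρ : 1 < ρ) (hw0 : 0 ≤ w) (hw1 : w ≤ 1)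
    (ha0 : 0 ≤ a) (ha1 : a ≤ 1) (φ : ℤ → ℝ) (hφ : ∃ M, ∀ j : ℤ, |φ j| ≤ M)
    (U : ℤ → ℝ) (hU : ∃ M, ∀ j : ℤ, |U j| ≤ M) :
    ∃ M, ∀ j : ℤ, |Fop ρ w a φ U j| ≤ M := by
  obtain ⟨M, hM⟩ := hU
  obtain ⟨N, hN⟩ := hφ
  have hM0 : 0 ≤ M := (abs_nonneg _).trans (hM 0)
  refine ⟨max M N, fun j => ?_⟩
  have h1 : |(1 / ρ) * ((1 - w) * U j + w * (a * U (j + 1) + (1 - a) * U (j - 1)))| ≤ (1 / ρ) * M :=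
    Fop_inner_bound ρ w a hρ hw0 hw1 ha0 ha1 (hM j) (hM (j+1)) (hM (j-1))
  have h2 : (1 / ρ) * M ≤ M := by
    rw [div_mul_eq_mul_div, one_mul, div_le_iff₀ (by linarith)]
    nlinarith
  exact abs_max_le_max_abs_abs.trans (max_le_max (h1.trans h2) (hN j))

/-- For `ρ > 1`, `0 ≤ w ≤ 1`, `0 ≤ a ≤ 1` and bounded obstacle `φ`: `F` maps `l∞(ℤ)` into
itself, is a contraction with `‖F U − F V‖ ≤ (1/ρ)·‖U − V‖`, hence has a unique fixed
point in `l∞(ℤ)`; moreover any uniformly bounded family `(Wⁿ)` with `Wⁿ = F(Wⁿ⁺¹)` is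
independent of `n` and `W⁰` is that fixed point: the limit as maturity tends to infinity
of the explicit-difference-scheme price of an American put option does not depend on
time. -/
theorem Fop_contraction_and_time_independence
    (ρ w a : ℝ) (hρ : 1 < ρ) (hw0 : 0 ≤ w) (hw1 : w ≤ 1) (ha0 : 0 ≤ a) (ha1 : a ≤ 1)
    (φ : ℤ → ℝ) (hφ : ∃ M, ∀ j : ℤ, |φ j| ≤ M) :
    (∀ U : ℤ → ℝ, (∃ M, ∀ j : ℤ, |U j| ≤ M) →
      ∃ M, ∀ j : ℤ, |Fop ρ w a φ U j| ≤ M) ∧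
    (∀ U V : ℤ → ℝ, (∃ M, ∀ j : ℤ, |U j| ≤ M) → (∃ M, ∀ j : ℤ, |V j| ≤ M) →
      (⨆ j : ℤ, |Fop ρ w a φ U j - Fop ρ w a φ V j|) ≤
        (1 / ρ) * ⨆ j : ℤ, |U j - V j|) ∧
    (∃! U : ℤ → ℝ, (∃ M, ∀ j : ℤ, |U j| ≤ M) ∧ Fop ρ w a φ U = U) ∧
    (∀ W : ℕ → ℤ → ℝ, (∃ M, ∀ (n : ℕ) (j : ℤ), |W n j| ≤ M) →
      (∀ n : ℕ, W n = Fop ρ w a φ (W (n + 1))) →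
      (∀ n : ℕ, W n = W 0) ∧ Fop ρ w a φ (W 0) = W 0) := by
  have hρ0 : (0:ℝ) < ρ := by linarith
  have hρ0' : (0:ℝ) ≤ 1 / ρ := by positivity
  have hρ1 : 1 / ρ < 1 := by rw [div_lt_one hρ0]; exact hρ
  -- part 1
  have part1 : ∀ U : ℤ → ℝ, (∃ M, ∀ j : ℤ, |U j| ≤ M) →
      ∃ M, ∀ j : ℤ, |Fop ρ w a φ U j| ≤ M :=
    fun U hU => Fop_bounded ρ w a hρ hw0 hw1 ha0 ha1 φ hφ U hU
  -- part 2
  have part2 : ∀ U V : ℤ → ℝ, (∃ M, ∀ j : ℤ, |U j| ≤ M) → (∃ M, ∀ j : ℤ, |V j| ≤ M) →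
      (⨆ j : ℤ, |Fop ρ w a φ U j - Fop ρ w a φ V j|) ≤
        (1 / ρ) * ⨆ j : ℤ, |U j - V j| := by
    intro U V ⟨MU, hMU⟩ ⟨MV, hMV⟩
    have hbdd : BddAbove (Set.range fun j : ℤ => |U j - V j|) := by
      refine ⟨MU + MV, ?_⟩
      rintro x ⟨j, rfl⟩
      calc |U j - V j| ≤ |U j| + |V j| := abs_sub _ _
        _ ≤ MU + MV := add_le_add (hMU j) (hMV j)
    have hS : ∀ j : ℤ, |U j - V j| ≤ ⨆ j : ℤ, |U j - V j| := fun j => le_ciSup hbdd j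
    have hS0 : 0 ≤ ⨆ j : ℤ, |U j - V j| := (abs_nonneg _).trans (hS 0)
    exact Real.iSup_le (fun j => Fop_pointwise ρ w a hρ hw0 hw1 ha0 ha1 φ U V hS j)
      (mul_nonneg hρ0' hS0)
  refine ⟨part1, part2, ?_, ?_⟩
  -- part 3: unique fixed point
  · -- uniqueness helper: any two bounded fixed points agree
    have uniq : ∀ U V : ℤ → ℝ, (∃ M, ∀ j : ℤ, |U j| ≤ M) → (∃ M, ∀ j : ℤ, |V j| ≤ M) →
        Fop ρ w a φ U = U → Fop ρ w a φ V = V → U = V := by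
      intro U V hU hV hfU hfV
      obtain ⟨MU, hMU⟩ := hU
      obtain ⟨MV, hMV⟩ := hV
      have hbdd : BddAbove (Set.range fun j : ℤ => |U j - V j|) := by
        refine ⟨MU + MV, ?_⟩
        rintro x ⟨j, rfl⟩
        calc |U j - V j| ≤ |U j| + |V j| := abs_sub _ _
          _ ≤ MU + MV := add_le_add (hMU j) (hMV j)
      set S := ⨆ j : ℤ, |U j - V j| with hSdef
      have hS : ∀ j : ℤ, |U j - V j| ≤ S := fun j => le_ciSup hbdd j
      have hS0 : 0 ≤ S := (abs_nonneg _).trans (hS 0)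
      have hcontr := part2 U V ⟨MU, hMU⟩ ⟨MV, hMV⟩
      rw [hfU, hfV] at hcontr
      have hSle : S ≤ 0 := by nlinarith
      funext j
      have := (hS j).trans hSle
      have : |U j - V j| = 0 := le_antisymm this (abs_nonneg _)
      have := abs_eq_zero.mp this
      linarith
    -- existence via Banach fixed point on BoundedContinuousFunction ℤ ℝ
    obtain ⟨G, hG⟩ : ∃ G : (BoundedContinuousFunction ℤ ℝ) → (BoundedContinuousFunction ℤ ℝ), ∀ f j, G f j = Fop ρ w a φ f j := by
      have hb : ∀ f : BoundedContinuousFunction ℤ ℝ, ∃ M, ∀ j, ‖Fop ρ w a φ (⇑f) j‖ ≤ M := fun f => by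
        simpa [Real.norm_eq_abs] using
          part1 f ⟨‖f‖, fun j => by simpa [Real.norm_eq_abs] using f.norm_coe_le_norm j⟩
      choose C hC using hb
      exact ⟨fun f => BoundedContinuousFunction.ofNormedAddCommGroup
        (Fop ρ w a φ f) continuous_of_discreteTopology (C f) (hC f), fun f j => rfl⟩
    have hL : LipschitzWith ⟨1 / ρ, hρ0'⟩ G := by
      apply LipschitzWith.of_dist_le_mul
      intro f g
      refine BoundedContinuousFunction.dist_le (by positivity) |>.mpr fun j => ?_
      rw [hG, hG, Real.dist_eq]
      exact Fop_pointwise ρ w a hρ hw0 hw1 ha0 ha1 φ f g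
        (fun j => by rw [← Real.dist_eq]; exact BoundedContinuousFunction.dist_coe_le_dist j) j
    have hCW : ContractingWith ⟨1 / ρ, hρ0'⟩ G := ⟨(NNReal.coe_lt_coe (r₁ := ⟨1 / ρ, hρ0'⟩) (r₂ := 1)).mp hρ1, hL⟩
    have hfix : G (hCW.fixedPoint G) = hCW.fixedPoint G := hCW.fixedPoint_isFixedPt
    set fp := hCW.fixedPoint G with hfp
    refine ⟨⇑fp, ⟨⟨‖fp‖, fun j => by simpa [Real.norm_eq_abs] using fp.norm_coe_le_norm j⟩, ?_⟩, ?_⟩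
    · funext j
      rw [← hG fp j, hfix]
    · rintro V ⟨hVb, hVf⟩
      exact uniq V fp hVb ⟨‖fp‖, fun j => by simpa [Real.norm_eq_abs] using fp.norm_coe_le_norm j⟩
        hVf (funext fun j => by rw [← hG fp j, hfix])
  -- part 4
  · intro W ⟨M, hM⟩ hrec
    have hM0 : 0 ≤ M := (abs_nonneg _).trans (hM 0 0)
    have key : ∀ k : ℕ, ∀ n m : ℕ, ∀ j : ℤ, |W n j - W m j| ≤ (1 / ρ) ^ k * (2 * M) := by
      intro k
      induction k with
      | zero =>
        intro n m j
        simp only [pow_zero, one_mul]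
        calc |W n j - W m j| ≤ |W n j| + |W m j| := abs_sub _ _
          _ ≤ 2 * M := by linarith [hM n j, hM m j]
      | succ k ih =>
        intro n m j
        rw [hrec n, hrec m]
        have := Fop_pointwise ρ w a hρ hw0 hw1 ha0 ha1 φ (W (n+1)) (W (m+1)) (ih (n+1) (m+1)) j
        calc |Fop ρ w a φ (W (n+1)) j - Fop ρ w a φ (W (m+1)) j|
            ≤ (1 / ρ) * ((1 / ρ) ^ k * (2 * M)) := this
          _ = (1 / ρ) ^ (k + 1) * (2 * M) := by ring
    have hzero : ∀ n m : ℕ, ∀ j : ℤ, W n j = W m j := by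
      intro n m j
      have htend : Filter.Tendsto (fun k : ℕ => (1 / ρ) ^ k * (2 * M)) Filter.atTop (nhds 0) := by
        have := tendsto_pow_atTop_nhds_zero_of_lt_one hρ0' hρ1
        simpa using this.mul_const (2 * M)
      have hle : |W n j - W m j| ≤ 0 := ge_of_tendsto' htend (fun k => key k n m j)
      have : |W n j - W m j| = 0 := le_antisymm hle (abs_nonneg _)
      have := abs_eq_zero.mp this
      linarith
    refine ⟨fun n => funext fun j => hzero n 0 j, ?_⟩
    have h1 : W 1 = W 0 := funext fun j => hzero 1 0 j
    conv_lhs => rw [← h1]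
    exact (hrec 0).symm
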